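/- The rotational surface of hyperbolic type with κ₁ ≠ 0 is a non-trivial Chen surface (i.e. its Chen invariant λ vanishes) if and only if r²κ⁴ − (r'')² + κ₁² = 0, where the Chen condition is ⟨σ(x,y), H⟩ = 0 with σ(x,y) = ((rκ² + εr'')/(2rκ))n₁ + (εκ₁/(2rκ))n₂ and H = ((rκ² − εr'')/(2rκ))n₁ − (εκ₁/(2rκ))n₂. -/

import Mathlib

noncomputable section

/-- Minkowski inner product of signature (3,1) on ℝ⁴. -/
def mink (a b : ℝ × ℝ × ℝ × ℝ) : ℝ :=
  a.1 * b.1 + a.2.1 * b.2.1 + a.2.2.1 * b.2.2.1 - a.2.2.2 * b.2.2.2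

lemma mink_bilin (u v w x : ℝ) (a b : ℝ × ℝ × ℝ × ℝ) :
    mink (u • a + v • b) (w • a - x • b)
      = u * w * mink a a + (v * w - u * x) * mink a b - v * x * mink b b := by
  obtain ⟨a1, a2, a3, a4⟩ := a
  obtain ⟨b1, b2, b3, b4⟩ := b
  simp [mink, Prod.smul_def]
  ring

/-- The hyperbolic rotational surface with κ₁ ≠ 0 is a non-trivial Chen
surface, i.e. ⟨σ(x,y), H⟩ = 0, if and only if r²κ⁴ − (r'')² + κ₁² = 0. -/
theorem stmt12 (r κ r'' κ₁ ε : ℝ)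
    (hrpos : 0 < r) (hκpos : 0 < κ) (hε : ε = 1 ∨ ε = -1)
    (hκ₁ : κ₁ ≠ 0)
    (n₁ n₂ : ℝ × ℝ × ℝ × ℝ)
    (hn₁ : mink n₁ n₁ = ε) (hn₂ : mink n₂ n₂ = -ε) (hn₁₂ : mink n₁ n₂ = 0)
    (σxy H : ℝ × ℝ × ℝ × ℝ)
    (hσxy : σxy = ((r * κ^2 + ε * r'') / (2 * r * κ)) • n₁
               + ((ε * κ₁) / (2 * r * κ)) • n₂)
    (hH : H = ((r * κ^2 - ε * r'') / (2 * r * κ)) • n₁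
            - ((ε * κ₁) / (2 * r * κ)) • n₂) :
    mink σxy H = 0 ↔ r^2 * κ^4 - r''^2 + κ₁^2 = 0 := by
  subst hσxy hH
  rw [mink_bilin, hn₁, hn₂, hn₁₂]
  have hr : r ≠ 0 := hrpos.ne'
  have hκ : κ ≠ 0 := hκpos.ne'
  have hε2 : ε^2 = 1 := by rcases hε with h | h <;> simp [h] <;> ring
  have hεne : ε ≠ 0 := by rcases hε with h | h <;> simp [h]
  have key : ((r * κ^2 + ε * r'') / (2 * r * κ)) * ((r * κ^2 - ε * r'') / (2 * r * κ)) * ε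
      + ((ε * κ₁) / (2 * r * κ) * ((r * κ^2 - ε * r'') / (2 * r * κ))
        - ((r * κ^2 + ε * r'') / (2 * r * κ)) * ((ε * κ₁) / (2 * r * κ))) * 0
      - ((ε * κ₁) / (2 * r * κ)) * ((ε * κ₁) / (2 * r * κ)) * (-ε)
      = ε * (r^2 * κ^4 - r''^2 + κ₁^2) / (4 * r^2 * κ^2) := by
    have hε3 : ε^3 = ε := by rw [pow_succ, hε2, one_mul]
    field_simp
    ring_nf
    rw [hε2]; ring
  rw [key]
  constructor
  · intro h
    have := mul_eq_zero.mp ((div_eq_zero_iff.mp h).resolve_right (by positivity))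
    rcases this with h' | h'
    · exact absurd h' hεne
    · exact h'
  · intro h; rw [h]; simp
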